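/- Let f : ℝ → ℝ≥0 be Lebesgue-integrable and let A ⊆ ℝ be a measurable set with vol(A) = L < ∞. Then ∫_A f(x) dx ≤ ∫_{|x| < L/2} f^σ(x) dx, i.e., the integral of f over any set of measure L is at most the integral of its symmetric decreasing rearrangement over the centered open interval of length L. -/

import Mathlib

open MeasureTheory Set
open scoped ENNReal NNReal

noncomputable section

/-- A probability density function on ℝ: measurable, nonnegative (via `ℝ≥0`),
integrating to one against Lebesgue measure. -/
def IsPdf (f : ℝ → ℝ≥0) : Prop :=
  Measurable f ∧ ∫⁻ x, (f x : ℝ≥0∞) = 1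

/-- `f` is symmetric and unimodal about `c`. -/
def ASU (c : ℝ) (f : ℝ → ℝ≥0) : Prop :=
  (∀ x, f (c - x) = f (c + x)) ∧ MonotoneOn f (Iic c) ∧ AntitoneOn f (Ici c)

/-- A distortion function: measurable, even, nondecreasing on `[0, ∞)`. -/
def IsDistortion (d : ℝ → ℝ≥0∞) : Prop :=
  Measurable d ∧ (∀ x, d (-x) = d x) ∧ MonotoneOn d (Ici (0 : ℝ))

/-- Symmetric decreasing rearrangement of an `ℝ≥0∞`-valued function:
`f^σ(x) = ∫_0^∞ 1[2|x| < vol{z : f z > ρ}] dρ`. -/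
def sdr (f : ℝ → ℝ≥0∞) (x : ℝ) : ℝ≥0∞ :=
  ∫⁻ ρ in Ioi (0 : ℝ),
    if ENNReal.ofReal (2 * |x|) < volume {z : ℝ | ENNReal.ofReal ρ < f z} then 1 else 0

/-- Symmetric decreasing rearrangement of an `ℝ≥0`-valued function. -/
def sdr' (f : ℝ → ℝ≥0) : ℝ → ℝ≥0∞ := sdr fun x => (f x : ℝ≥0∞)

/-- `ξ` majorizes `π`: `∫_{-ρ}^{ρ} ξ^σ ≥ ∫_{-ρ}^{ρ} π^σ` for all `ρ ≥ 0`. -/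
def Majorizes (ξ π : ℝ → ℝ≥0) : Prop :=
  ∀ ρ : ℝ, 0 ≤ ρ → ∫⁻ x in Ioo (-ρ) ρ, sdr' π x ≤ ∫⁻ x in Ioo (-ρ) ρ, sdr' ξ x

/-- Hardy–Littlewood "bathtub" bound: the integral of `f` over any set of Lebesgue
measure `L` is at most the integral of `f^σ` over the centered interval of length `L`. -/
lemma vol_ball_ennreal (M : ℝ≥0∞) :
    volume {x : ℝ | ENNReal.ofReal (2 * |x|) < M} = M := by
  rcases eq_or_ne M ⊤ with rfl | hM
  · have : {x : ℝ | ENNReal.ofReal (2 * |x|) < ⊤} = univ := by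
      ext x; simp only [mem_setOf_eq, ENNReal.ofReal_lt_top, mem_univ]
    rw [this, Real.volume_univ]
  · have hset : {x : ℝ | ENNReal.ofReal (2 * |x|) < M}
        = Ioo (-(M.toReal / 2)) (M.toReal / 2) := by
      ext x
      rw [mem_setOf_eq, ENNReal.ofReal_lt_iff_lt_toReal (by positivity) hM]
      constructor
      · intro h; rw [mem_Ioo, ← abs_lt]; linarith
      · intro h; rw [mem_Ioo, ← abs_lt] at h; linarith
    rw [hset, Real.volume_Ioo]
    rw [show M.toReal / 2 - -(M.toReal / 2) = M.toReal by ring,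
      ENNReal.ofReal_toReal hM]

theorem stmt11 (f : ℝ → ℝ≥0) (hf : Measurable f)
    (hint : ∫⁻ x, (f x : ℝ≥0∞) ≠ ⊤)
    (A : Set ℝ) (hA : MeasurableSet A) (L : ℝ) (hL0 : 0 ≤ L)
    (hL : volume A = ENNReal.ofReal L) :
    ∫⁻ x in A, (f x : ℝ≥0∞) ≤ ∫⁻ x in {x : ℝ | |x| < L / 2}, sdr' f x := by
  set m : ℝ → ℝ≥0∞ := fun ρ => volume {z : ℝ | ENNReal.ofReal ρ < (f z : ℝ≥0∞)} with hm
  have hm_anti : Antitone m := by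
    intro a b hab
    exact measure_mono fun z hz => lt_of_le_of_lt (ENNReal.ofReal_le_ofReal hab) hz
  have hm_meas : Measurable m := hm_anti.measurable
  -- Layer cake for the LHS
  have hg : Measurable fun x => ((f x : ℝ) : ℝ) := hf.coe_nnreal_real
  have layer : ∫⁻ x in A, (f x : ℝ≥0∞)
      = ∫⁻ ρ in Ioi (0:ℝ), (volume.restrict A) {a | ρ < (f a : ℝ)} := by
    have := lintegral_eq_lintegral_meas_lt (volume.restrict A)
      (ae_of_all _ fun x => (f x).coe_nonneg) hg.aemeasurable
    simpa [ENNReal.ofReal_coe_nnreal] using this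
  -- Pointwise bound
  have pb : ∀ ρ ∈ Ioi (0:ℝ),
      (volume.restrict A) {a | ρ < (f a : ℝ)} ≤ min (ENNReal.ofReal L) (m ρ) := by
    intro ρ hρ
    rw [Measure.restrict_apply' hA]
    refine le_min ?_ ?_
    · exact hL ▸ measure_mono inter_subset_right
    · refine le_trans (measure_mono inter_subset_left) (le_of_eq ?_)
      congr 1
      ext z
      simp only [mem_setOf_eq, ← ENNReal.ofReal_coe_nnreal,
        ENNReal.ofReal_lt_ofReal_iff_of_nonneg (le_of_lt hρ)]
  -- RHS computation
  set T : Set ℝ := {x : ℝ | |x| < L / 2} with hT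
  have hTmeas : MeasurableSet T := measurableSet_lt (by measurability) measurable_const
  have hTvol : ∀ x, x ∈ T ↔ ENNReal.ofReal (2 * |x|) < ENNReal.ofReal L := by
    intro x
    rw [ENNReal.ofReal_lt_ofReal_iff_of_nonneg (by positivity)]
    constructor <;> intro h <;> [skip; skip] <;> simp only [hT, mem_setOf_eq] at * <;> linarith
  have hFmeas : Measurable (Function.uncurry fun (x ρ : ℝ) =>
      if ENNReal.ofReal (2 * |x|) < m ρ then (1:ℝ≥0∞) else 0) := by
    have hset : MeasurableSet {p : ℝ × ℝ | ENNReal.ofReal (2 * |p.1|) < m p.2} :=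
      measurableSet_lt (ENNReal.measurable_ofReal.comp
        ((measurable_fst.abs).const_mul 2)) (hm_meas.comp measurable_snd)
    exact Measurable.ite hset measurable_const measurable_const
  have rhs : ∫⁻ x in T, sdr' f x = ∫⁻ ρ in Ioi (0:ℝ), min (ENNReal.ofReal L) (m ρ) := by
    simp only [sdr', sdr, ← hm]
    rw [lintegral_lintegral_swap hFmeas.aemeasurable]
    refine lintegral_congr fun ρ => ?_
    have : ∀ x : ℝ, (if ENNReal.ofReal (2 * |x|) < m ρ then (1:ℝ≥0∞) else 0)
        = ({x : ℝ | ENNReal.ofReal (2 * |x|) < m ρ}).indicator (fun _ => 1) x := by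
      intro x; simp [Set.indicator_apply, mem_setOf_eq]
    simp_rw [this]
    have hsm : MeasurableSet {x : ℝ | ENNReal.ofReal (2 * |x|) < m ρ} :=
      measurableSet_lt (by fun_prop) measurable_const
    rw [lintegral_indicator hsm, setLIntegral_one, Measure.restrict_apply hsm]
    have heq : {x : ℝ | ENNReal.ofReal (2 * |x|) < m ρ} ∩ T
        = {x : ℝ | ENNReal.ofReal (2 * |x|) < min (ENNReal.ofReal L) (m ρ)} := by
      ext x
      simp only [mem_inter_iff, mem_setOf_eq, lt_min_iff, hTvol x]
      tauto
    rw [heq, vol_ball_ennreal]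
  rw [layer, rhs]
  exact setLIntegral_mono_ae (by fun_prop) (ae_of_all _ pb)
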